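/- For functions k : G × G × G → ℂ define the twisted product (k₁ * k₂)(u,w;t) := ∫_G k₁(u,v; v w⁻¹ t) · k₂(v,w; t) · φ(u v⁻¹, v w⁻¹, t)⁻¹ · φ(u v⁻¹, v w⁻¹, w) dμ(v), and define the strictification map k ↦ k^F by k^F(u,w;x) := k(u,w; w x) · φ(u w⁻¹, w, x)⁻¹. Then whenever the integrals converge absolutely, (k₁ * k₂)^F(u,w;x) = ∫_G k₁^F(u,v;x) · k₂^F(v,w;x) dμ(v) for all u, w, x ∈ G; that is, the strictified product agrees with the ordinary associative product of kernel-valued functions on G, so the strictification of the twisted compact operators is isomorphic to C(G, K(L²(G))). -/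

import Mathlib

open MeasureTheory

/-- **strictification of the twisted compact operators.**  Let `G` be a
locally compact group with left Haar measure `μ` and `φ` a unit-circle-valued function on
`G³` satisfying the pentagonal identity.  For `k : G × G × G → ℂ` define the twisted
product `(k₁ * k₂)(u,w;t) := ∫ k₁(u,v; vw⁻¹t) k₂(v,w;t) φ(uv⁻¹,vw⁻¹,t)⁻¹ φ(uv⁻¹,vw⁻¹,w) dμ(v)`
and the strictification `k^F(u,w;x) := k(u,w;wx) φ(uw⁻¹,w,x)⁻¹`.  Then whenever the
integrals converge absolutely,
`(k₁ * k₂)^F(u,w;x) = ∫ k₁^F(u,v;x) k₂^F(v,w;x) dμ(v)`: the strictified product is the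
ordinary associative product of kernel-valued functions, so the strictification of the
twisted compact operators is isomorphic to `C(G, K(L²(G)))`. -/
theorem strictification_of_twisted_kernels
    {G : Type*} [Group G] [TopologicalSpace G] [IsTopologicalGroup G]
    [LocallyCompactSpace G] [MeasurableSpace G] [BorelSpace G]
    (μ : Measure G) [μ.IsHaarMeasure]
    (φ : G → G → G → ℂ) (hφ : ∀ x y z, ‖φ x y z‖ = 1)
    (hpent : ∀ x y z w, φ x y z * φ x (y * z) w * φ y z w
      = φ (x * y) z w * φ x y (z * w))
    (k₁ k₂ : G → G → G → ℂ) (u w x : G)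
    (hint : Integrable (fun v => k₁ u v (v * x) * k₂ v w (w * x)) μ) :
    (∫ v, k₁ u v (v * w⁻¹ * (w * x)) * k₂ v w (w * x) *
          (φ (u * v⁻¹) (v * w⁻¹) (w * x))⁻¹ * φ (u * v⁻¹) (v * w⁻¹) w ∂μ)
        * (φ (u * w⁻¹) w x)⁻¹
      = ∫ v, (k₁ u v (v * x) * (φ (u * v⁻¹) v x)⁻¹) *
          (k₂ v w (w * x) * (φ (v * w⁻¹) w x)⁻¹) ∂μ := by
  have hne : ∀ a b c, φ a b c ≠ 0 := by
    intro a b c h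
    have := hφ a b c
    rw [h] at this
    simp at this
  rw [← integral_mul_const]
  congr 1
  funext v
  have hp := hpent (u * v⁻¹) (v * w⁻¹) w x
  have h1 : v * w⁻¹ * w = v := by group
  have h2 : u * v⁻¹ * (v * w⁻¹) = u * w⁻¹ := by group
  have h3 : v * w⁻¹ * (w * x) = v * x := by group
  rw [h1, h2] at hp
  rw [h3]
  have ha := hne (u * v⁻¹) (v * w⁻¹) (w * x)
  have hb := hne (u * w⁻¹) w x
  have hc := hne (u * v⁻¹) v x
  have hd := hne (v * w⁻¹) w x
  have key : (φ (u * v⁻¹) (v * w⁻¹) (w * x))⁻¹ * φ (u * v⁻¹) (v * w⁻¹) w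
        * (φ (u * w⁻¹) w x)⁻¹
      = (φ (u * v⁻¹) v x)⁻¹ * (φ (v * w⁻¹) w x)⁻¹ := by
    rw [mul_assoc, inv_mul_eq_iff_eq_mul₀ ha, ← mul_inv]
    rw [mul_inv_eq_iff_eq_mul₀ hb, mul_comm, ← mul_assoc,
      eq_mul_inv_iff_mul_eq₀ (mul_ne_zero hc hd)]
    linear_combination hp
  calc k₁ u v (v * x) * k₂ v w (w * x) * (φ (u * v⁻¹) (v * w⁻¹) (w * x))⁻¹ *
        φ (u * v⁻¹) (v * w⁻¹) w * (φ (u * w⁻¹) w x)⁻¹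
      = k₁ u v (v * x) * k₂ v w (w * x) * ((φ (u * v⁻¹) (v * w⁻¹) (w * x))⁻¹ *
        φ (u * v⁻¹) (v * w⁻¹) w * (φ (u * w⁻¹) w x)⁻¹) := by ring
    _ = k₁ u v (v * x) * k₂ v w (w * x) * ((φ (u * v⁻¹) v x)⁻¹ * (φ (v * w⁻¹) w x)⁻¹) := by
        rw [key]
    _ = k₁ u v (v * x) * (φ (u * v⁻¹) v x)⁻¹ * (k₂ v w (w * x) * (φ (v * w⁻¹) w x)⁻¹) := by
        ring
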